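/- Let X, Z, U, V be finite random variables with Markov chain U → V → X → Z and suppose H(X|Y,V)=0 where Y is a further variable with U → V → X → (Y,Z). Then I(Y;V|U) − I(Z;V|U) + H(X|Z,V) = I(X;Y|U) − I(X;Z|U). -/

import Mathlib

open scoped BigOperators Classical

variable {Ω : Type} [Fintype Ω]

/-- Probability that the random variable `X` takes the value `x` under the pmf `p`. -/
noncomputable def prEq {α : Type} (p : Ω → ℝ) (X : Ω → α) (x : α) : ℝ :=
  ∑ ω, if X ω = x then p ω else 0

/-- Shannon entropy of a finite random variable. -/
noncomputable def ent {α : Type} [Fintype α] (p : Ω → ℝ) (X : Ω → α) : ℝ :=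
  ∑ x, Real.negMulLog (prEq p X x)

/-- Conditional Shannon entropy `H(X | Y)`. -/
noncomputable def condEnt {α β : Type} [Fintype α] [Fintype β]
    (p : Ω → ℝ) (X : Ω → α) (Y : Ω → β) : ℝ :=
  ent p (fun ω => (X ω, Y ω)) - ent p Y

/-- Mutual information `I(X ; Y)`. -/
noncomputable def mutInf {α β : Type} [Fintype α] [Fintype β]
    (p : Ω → ℝ) (X : Ω → α) (Y : Ω → β) : ℝ :=
  ent p X + ent p Y - ent p (fun ω => (X ω, Y ω))

/-- Conditional mutual information `I(X ; Y | Z)`. -/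
noncomputable def condMutInf {α β γ : Type} [Fintype α] [Fintype β] [Fintype γ]
    (p : Ω → ℝ) (X : Ω → α) (Y : Ω → β) (Z : Ω → γ) : ℝ :=
  condEnt p X Z - condEnt p X (fun ω => (Y ω, Z ω))

/-- `X` and `Y` are conditionally independent given `Z`. -/
def CondIndep {α β γ : Type} (p : Ω → ℝ) (X : Ω → α) (Y : Ω → β) (Z : Ω → γ) : Prop :=
  ∀ x y z,
    prEq p (fun ω => (X ω, Y ω, Z ω)) (x, y, z) * prEq p Z z =
      prEq p (fun ω => (X ω, Z ω)) (x, z) * prEq p (fun ω => (Y ω, Z ω)) (y, z)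

/-- `X` and `Y` are independent. -/
def Indep {α β : Type} (p : Ω → ℝ) (X : Ω → α) (Y : Ω → β) : Prop :=
  ∀ x y, prEq p (fun ω => (X ω, Y ω)) (x, y) = prEq p X x * prEq p Y y

/-- `p` is a probability mass function on `Ω`. -/
def IsPMF (p : Ω → ℝ) : Prop := (∀ ω, 0 ≤ p ω) ∧ ∑ ω, p ω = 1

lemma prEq_comp {α β : Type} [Fintype α] (p : Ω → ℝ) (W : Ω → α) (h : α → β) (y : β)
    [DecidablePred fun x => h x = y] :
    prEq p (fun ω => h (W ω)) y = ∑ x, if h x = y then prEq p W x else 0 := by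
  unfold prEq
  have key : ∀ x : α, (if h x = y then ∑ ω, if W ω = x then p ω else 0 else 0)
      = ∑ ω, if W ω = x then (if h x = y then p ω else 0) else 0 := by
    intro x; split_ifs with hx <;> simp [hx]
  rw [Finset.sum_congr rfl fun x _ => key x, Finset.sum_comm]
  refine Finset.sum_congr rfl fun ω _ => ?_
  rw [Finset.sum_ite_eq]
  simp

lemma prEq_nonneg {α : Type} (p : Ω → ℝ) (hp : ∀ ω, 0 ≤ p ω) (X : Ω → α) (x : α) :
    0 ≤ prEq p X x :=
  Finset.sum_nonneg fun ω _ => by split <;> simp [hp ω]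

lemma prEq_comp_ge {α β : Type} [Fintype α] (p : Ω → ℝ) (hp : ∀ ω, 0 ≤ p ω)
    (W : Ω → α) (h : α → β) (x : α) :
    prEq p W x ≤ prEq p (fun ω => h (W ω)) (h x) := by
  classical
  refine le_trans ?_ (le_of_eq (prEq_comp p W h (h x)).symm)
  have := Finset.single_le_sum (f := fun a : α => if h a = h x then prEq p W a else 0)
    (fun a _ => by split <;> simp [prEq_nonneg p hp]) (Finset.mem_univ x)
  simpa using this

lemma ent_comp_inj {α β : Type} [Fintype α] [Fintype β] (p : Ω → ℝ) (W : Ω → α)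
    (f : α → β) (hf : Function.Injective f) :
    ent p (fun ω => f (W ω)) = ent p W := by
  classical
  unfold ent
  rw [← Finset.sum_subset (Finset.subset_univ (Finset.univ.image f))]
  · rw [Finset.sum_image (fun a _ b _ hab => hf hab)]
    refine Finset.sum_congr rfl fun x _ => ?_
    congr 1
    unfold prEq
    refine Finset.sum_congr rfl fun ω _ => ?_
    simp [hf.eq_iff]
  · intro y _ hy
    have : prEq p (fun ω => f (W ω)) y = 0 := by
      unfold prEq
      refine Finset.sum_eq_zero fun ω _ => ?_
      have : f (W ω) ≠ y := fun h => hy (Finset.mem_image.mpr ⟨W ω, Finset.mem_univ _, h⟩)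
      simp [this]
    simp [this, Real.negMulLog_zero]

lemma ent_comp_eq_weighted {α β : Type} [Fintype α] [Fintype β] (p : Ω → ℝ) (W : Ω → α)
    (h : α → β) :
    ent p (fun ω => h (W ω)) =
      ∑ x, -(prEq p W x * Real.log (prEq p (fun ω => h (W ω)) (h x))) := by
  classical
  unfold ent
  have key : ∀ y : β, Real.negMulLog (prEq p (fun ω => h (W ω)) y)
      = ∑ x, if h x = y then -(prEq p W x * Real.log (prEq p (fun ω => h (W ω)) (h x))) else 0 := by
    intro y
    have step : ∀ x : α, (if h x = y then -(prEq p W x * Real.log (prEq p (fun ω => h (W ω)) (h x))) else 0)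
        = -((if h x = y then prEq p W x else 0) * Real.log (prEq p (fun ω => h (W ω)) y)) := by
      intro x
      split_ifs with hx
      · rw [hx]
      · simp
    rw [Finset.sum_congr rfl fun x _ => step x, Finset.sum_neg_distrib, ← Finset.sum_mul,
      ← prEq_comp, Real.negMulLog, neg_mul]
  rw [Finset.sum_congr rfl fun y _ => key y, Finset.sum_comm]
  refine Finset.sum_congr rfl fun x _ => ?_
  simp

lemma condIndep_comp {α β γ α' β' : Type} [Fintype α] [Fintype β] [Fintype γ]
    (p : Ω → ℝ) (A : Ω → α) (B : Ω → β) (C : Ω → γ)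
    (h : CondIndep p A B C) (f : α → α') (g : β → β') :
    CondIndep p (fun ω => f (A ω)) (fun ω => g (B ω)) C := by
  classical
  intro x y z
  have e1 : prEq p (fun ω => (f (A ω), g (B ω), C ω)) (x, y, z)
      = ∑ t : α × β × γ, if (f t.1, g t.2.1, t.2.2) = (x, y, z)
          then prEq p (fun ω => (A ω, B ω, C ω)) t else 0 :=
    prEq_comp p (fun ω => (A ω, B ω, C ω)) (fun t => (f t.1, g t.2.1, t.2.2)) (x, y, z)
  have e1' : (∑ t : α × β × γ, if (f t.1, g t.2.1, t.2.2) = (x, y, z)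
          then prEq p (fun ω => (A ω, B ω, C ω)) t else 0)
      = ∑ a : α, ∑ b : β, if f a = x ∧ g b = y
          then prEq p (fun ω => (A ω, B ω, C ω)) (a, b, z) else 0 := by
    rw [Fintype.sum_prod_type]
    refine Finset.sum_congr rfl fun a _ => ?_
    rw [Fintype.sum_prod_type]
    refine Finset.sum_congr rfl fun b _ => ?_
    by_cases hab : f a = x ∧ g b = y
    · simp [Prod.ext_iff, hab.1, hab.2]
    · rw [if_neg hab]
      refine Finset.sum_eq_zero fun c _ => ?_
      rw [if_neg]
      simp only [Prod.mk.injEq, not_and]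
      intro h1 h2
      exact absurd ⟨h1, h2⟩ hab
  have e2 : prEq p (fun ω => (f (A ω), C ω)) (x, z)
      = ∑ s : α × γ, if (f s.1, s.2) = (x, z) then prEq p (fun ω => (A ω, C ω)) s else 0 :=
    prEq_comp p (fun ω => (A ω, C ω)) (fun s => (f s.1, s.2)) (x, z)
  have e2' : (∑ s : α × γ, if (f s.1, s.2) = (x, z) then prEq p (fun ω => (A ω, C ω)) s else 0)
      = ∑ a : α, if f a = x then prEq p (fun ω => (A ω, C ω)) (a, z) else 0 := by
    rw [Fintype.sum_prod_type]
    refine Finset.sum_congr rfl fun a _ => ?_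
    by_cases ha : f a = x
    · simp [Prod.ext_iff, ha]
    · rw [if_neg ha]
      refine Finset.sum_eq_zero fun c _ => ?_
      rw [if_neg]
      simp only [Prod.mk.injEq, not_and]
      intro h1; exact absurd h1 ha
  have e3 : prEq p (fun ω => (g (B ω), C ω)) (y, z)
      = ∑ s : β × γ, if (g s.1, s.2) = (y, z) then prEq p (fun ω => (B ω, C ω)) s else 0 :=
    prEq_comp p (fun ω => (B ω, C ω)) (fun s => (g s.1, s.2)) (y, z)
  have e3' : (∑ s : β × γ, if (g s.1, s.2) = (y, z) then prEq p (fun ω => (B ω, C ω)) s else 0)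
      = ∑ b : β, if g b = y then prEq p (fun ω => (B ω, C ω)) (b, z) else 0 := by
    rw [Fintype.sum_prod_type]
    refine Finset.sum_congr rfl fun b _ => ?_
    by_cases hb : g b = y
    · simp [Prod.ext_iff, hb]
    · rw [if_neg hb]
      refine Finset.sum_eq_zero fun c _ => ?_
      rw [if_neg]
      simp only [Prod.mk.injEq, not_and]
      intro h1; exact absurd h1 hb
  show prEq p (fun ω => (f (A ω), g (B ω), C ω)) (x, y, z) * prEq p C z
      = prEq p (fun ω => (f (A ω), C ω)) (x, z) * prEq p (fun ω => (g (B ω), C ω)) (y, z)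
  rw [e1, e1', e2, e2', e3, e3', Finset.sum_mul_sum, Finset.sum_mul]
  refine Finset.sum_congr rfl fun a _ => ?_
  rw [Finset.sum_mul]
  refine Finset.sum_congr rfl fun b _ => ?_
  by_cases hP : f a = x <;> by_cases hQ : g b = y <;>
    simp [hP, hQ, h a b z]

lemma condIndep_ent {α β γ : Type} [Fintype α] [Fintype β] [Fintype γ]
    (p : Ω → ℝ) (hp : ∀ ω, 0 ≤ p ω) (A : Ω → α) (B : Ω → β) (C : Ω → γ)
    (hi : CondIndep p A B C) :
    ent p (fun ω => (A ω, B ω, C ω)) + ent p C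
      = ent p (fun ω => (A ω, C ω)) + ent p (fun ω => (B ω, C ω)) := by
  classical
  set W : Ω → α × β × γ := fun ω => (A ω, B ω, C ω) with hW
  have eC : ent p C = ∑ t : α × β × γ, -(prEq p W t * Real.log (prEq p C t.2.2)) :=
    ent_comp_eq_weighted p W (fun t => t.2.2)
  have eAC : ent p (fun ω => (A ω, C ω))
      = ∑ t : α × β × γ, -(prEq p W t * Real.log (prEq p (fun ω => (A ω, C ω)) (t.1, t.2.2))) :=
    ent_comp_eq_weighted p W (fun t => (t.1, t.2.2))
  have eBC : ent p (fun ω => (B ω, C ω))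
      = ∑ t : α × β × γ, -(prEq p W t * Real.log (prEq p (fun ω => (B ω, C ω)) (t.2.1, t.2.2))) :=
    ent_comp_eq_weighted p W (fun t => (t.2.1, t.2.2))
  have eW : ent p W = ∑ t : α × β × γ, -(prEq p W t * Real.log (prEq p W t)) := by
    unfold ent
    exact Finset.sum_congr rfl fun t _ => by rw [Real.negMulLog, neg_mul]
  rw [eW, eC, eAC, eBC, ← Finset.sum_add_distrib, ← Finset.sum_add_distrib]
  refine Finset.sum_congr rfl fun t _ => ?_
  rcases eq_or_lt_of_le (prEq_nonneg p hp W t) with hq | hq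
  · simp [← hq]
  · have hC : 0 < prEq p C t.2.2 :=
      lt_of_lt_of_le hq (prEq_comp_ge p hp W (fun t => t.2.2) t)
    have hAC : 0 < prEq p (fun ω => (A ω, C ω)) (t.1, t.2.2) :=
      lt_of_lt_of_le hq (prEq_comp_ge p hp W (fun t => (t.1, t.2.2)) t)
    have hBC : 0 < prEq p (fun ω => (B ω, C ω)) (t.2.1, t.2.2) :=
      lt_of_lt_of_le hq (prEq_comp_ge p hp W (fun t => (t.2.1, t.2.2)) t)
    have key : prEq p W t * prEq p C t.2.2
        = prEq p (fun ω => (A ω, C ω)) (t.1, t.2.2) * prEq p (fun ω => (B ω, C ω)) (t.2.1, t.2.2) :=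
      hi t.1 t.2.1 t.2.2
    have hlog : Real.log (prEq p W t) + Real.log (prEq p C t.2.2)
        = Real.log (prEq p (fun ω => (A ω, C ω)) (t.1, t.2.2))
          + Real.log (prEq p (fun ω => (B ω, C ω)) (t.2.1, t.2.2)) := by
      rw [← Real.log_mul (ne_of_gt hq) (ne_of_gt hC),
        ← Real.log_mul (ne_of_gt hAC) (ne_of_gt hBC), key]
    linear_combination (-(prEq p W t)) * hlog

set_option maxHeartbeats 2000000 in
theorem stmt13 {𝓤 𝓥 𝓧 𝓨 𝓩 : Type} [Fintype 𝓤] [Fintype 𝓥] [Fintype 𝓧] [Fintype 𝓨] [Fintype 𝓩]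
    (p : Ω → ℝ) (hp : IsPMF p)
    (U : Ω → 𝓤) (V : Ω → 𝓥) (X : Ω → 𝓧) (Y : Ω → 𝓨) (Z : Ω → 𝓩)
    (hmc1 : CondIndep p U (fun ω => (X ω, Y ω, Z ω)) V)
    (hmc2 : CondIndep p (fun ω => (U ω, V ω)) (fun ω => (Y ω, Z ω)) X)
    (hXYV : condEnt p X (fun ω => (Y ω, V ω)) = 0) :
    condMutInf p Y V U - condMutInf p Z V U + condEnt p X (fun ω => (Z ω, V ω)) =
      condMutInf p X Y U - condMutInf p X Z U := by
  have c1 : CondIndep p U Y V :=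
    condIndep_comp p U (fun ω => (X ω, Y ω, Z ω)) V hmc1 id (fun t => t.2.1)
  have c2 : CondIndep p U Z V :=
    condIndep_comp p U (fun ω => (X ω, Y ω, Z ω)) V hmc1 id (fun t => t.2.2)
  have c3 : CondIndep p V Y X :=
    condIndep_comp p (fun ω => (U ω, V ω)) (fun ω => (Y ω, Z ω)) X hmc2 (fun s => s.2) (fun s => s.1)
  have c4 : CondIndep p V Z X :=
    condIndep_comp p (fun ω => (U ω, V ω)) (fun ω => (Y ω, Z ω)) X hmc2 (fun s => s.2) (fun s => s.2)
  have c5 : CondIndep p U Y X :=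
    condIndep_comp p (fun ω => (U ω, V ω)) (fun ω => (Y ω, Z ω)) X hmc2 (fun s => s.1) (fun s => s.1)
  have c6 : CondIndep p U Z X :=
    condIndep_comp p (fun ω => (U ω, V ω)) (fun ω => (Y ω, Z ω)) X hmc2 (fun s => s.1) (fun s => s.2)
  have E1 := condIndep_ent p hp.1 U Y V c1
  have E2 := condIndep_ent p hp.1 U Z V c2
  have E3 := condIndep_ent p hp.1 V Y X c3
  have E4 := condIndep_ent p hp.1 V Z X c4
  have E5 := condIndep_ent p hp.1 U Y X c5
  have E6 := condIndep_ent p hp.1 U Z X c6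
  have inj1 : Function.Injective (fun t : 𝓤 × 𝓨 × 𝓥 => (t.2.1, (t.2.2, t.1))) := by
    intro a b hab
    obtain ⟨a1, a2, a3⟩ := a; obtain ⟨b1, b2, b3⟩ := b
    simp_all [Prod.ext_iff]
  have inj2 : Function.Injective (fun t : 𝓤 × 𝓩 × 𝓥 => (t.2.1, (t.2.2, t.1))) := by
    intro a b hab
    obtain ⟨a1, a2, a3⟩ := a; obtain ⟨b1, b2, b3⟩ := b
    simp_all [Prod.ext_iff]
  have inj3 : Function.Injective (fun t : 𝓤 × 𝓨 × 𝓧 => (t.2.2, (t.2.1, t.1))) := by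
    intro a b hab
    obtain ⟨a1, a2, a3⟩ := a; obtain ⟨b1, b2, b3⟩ := b
    simp_all [Prod.ext_iff]
  have inj4 : Function.Injective (fun t : 𝓤 × 𝓩 × 𝓧 => (t.2.2, (t.2.1, t.1))) := by
    intro a b hab
    obtain ⟨a1, a2, a3⟩ := a; obtain ⟨b1, b2, b3⟩ := b
    simp_all [Prod.ext_iff]
  have inj5 : Function.Injective (fun t : 𝓥 × 𝓩 × 𝓧 => (t.2.2, (t.2.1, t.1))) := by
    intro a b hab
    obtain ⟨a1, a2, a3⟩ := a; obtain ⟨b1, b2, b3⟩ := b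
    simp_all [Prod.ext_iff]
  have inj6 : Function.Injective (fun t : 𝓥 × 𝓨 × 𝓧 => (t.2.2, (t.2.1, t.1))) := by
    intro a b hab
    obtain ⟨a1, a2, a3⟩ := a; obtain ⟨b1, b2, b3⟩ := b
    simp_all [Prod.ext_iff]
  have r1 : ent p (fun ω => (Y ω, (V ω, U ω))) = ent p (fun ω => (U ω, Y ω, V ω)) :=
    ent_comp_inj p (fun ω => (U ω, Y ω, V ω)) _ inj1
  have r2 : ent p (fun ω => (Z ω, (V ω, U ω))) = ent p (fun ω => (U ω, Z ω, V ω)) :=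
    ent_comp_inj p (fun ω => (U ω, Z ω, V ω)) _ inj2
  have r3 : ent p (fun ω => (X ω, (Y ω, U ω))) = ent p (fun ω => (U ω, Y ω, X ω)) :=
    ent_comp_inj p (fun ω => (U ω, Y ω, X ω)) _ inj3
  have r4 : ent p (fun ω => (X ω, (Z ω, U ω))) = ent p (fun ω => (U ω, Z ω, X ω)) :=
    ent_comp_inj p (fun ω => (U ω, Z ω, X ω)) _ inj4
  have r5 : ent p (fun ω => (X ω, (Z ω, V ω))) = ent p (fun ω => (V ω, Z ω, X ω)) :=
    ent_comp_inj p (fun ω => (V ω, Z ω, X ω)) _ inj5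
  have r6 : ent p (fun ω => (X ω, (Y ω, V ω))) = ent p (fun ω => (V ω, Y ω, X ω)) :=
    ent_comp_inj p (fun ω => (V ω, Y ω, X ω)) _ inj6
  simp only [condEnt] at hXYV
  rw [r6] at hXYV
  simp only [condMutInf, condEnt]
  rw [r1, r2, r3, r4, r5]
  linarith [E1, E2, E3, E4, E5, E6, hXYV]
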